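/- Let n ≥ 2, let μ > 0, and let φ be a Schwartz function on ℝ^{n−1}. For x' ∈ ℝ^{n−1} and x_n > 0 define u(x', x_n) = (2π)^{−n} ∫_{ℝⁿ} e^{i(x'·ξ' + x_n ξ_n)} φ̂(ξ') (⟨ξ'⟩ + iξ_n)^{−1−μ} dξ (the integral converges absolutely). Then Γ(μ+1) · x_n^{−μ} · u(x', x_n) → φ(x') uniformly in x' ∈ ℝ^{n−1} as x_n → 0+. -/

import Mathlib

open MeasureTheory Set

set_option maxHeartbeats 1000000

/-- The Fourier transform `φ̂(ξ') = ∫ e^{-i y'·ξ'} φ(y') dy'` on `ℝ^m`. -/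
noncomputable def fourierTr {m : ℕ} (φ : EuclideanSpace ℝ (Fin m) → ℂ)
    (ξ : EuclideanSpace ℝ (Fin m)) : ℂ :=
  ∫ y : EuclideanSpace ℝ (Fin m), Complex.exp (-Complex.I * (∑ i, y i * ξ i : ℝ)) * φ y

/-- The operator `K₀^μ` of Lemma 3.3:
`K₀^μ φ(x', x_n) = (2π)^{-n} ∫_{ℝⁿ} e^{i(x'·ξ' + x_n ξ_n)} φ̂(ξ') (⟨ξ'⟩+iξ_n)^{-1-μ} dξ`,
with `⟨ξ'⟩ = (1+|ξ'|²)^{1/2}` and principal complex powers. -/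
noncomputable def poissonKmu (n : ℕ) (μ : ℝ)
    (φ : SchwartzMap (EuclideanSpace ℝ (Fin (n - 1))) ℂ)
    (x' : EuclideanSpace ℝ (Fin (n - 1))) (t : ℝ) : ℂ :=
  ((2 * (Real.pi : ℂ)) ^ n)⁻¹ *
    ∫ ξ : EuclideanSpace ℝ (Fin (n - 1)) × ℝ,
      Complex.exp (Complex.I * ((∑ i, x' i * ξ.1 i : ℝ) + t * ξ.2 : ℝ)) *
        fourierTr (fun y => φ y) ξ.1 *
        ((Real.sqrt (1 + ‖ξ.1‖ ^ 2) : ℂ) + (ξ.2 : ℂ) * Complex.I) ^ (-1 - (μ : ℂ))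

open Complex Filter Topology FourierTransform RealInnerProductSpace

section Aux

/-- integrability of `t^s e^{-bt}` on `Ioi 0` -/
lemma intB {s b : ℝ} (hs : -1 < s) (hb : 0 < b) :
    IntegrableOn (fun t : ℝ => t ^ s * Real.exp (-(b * t))) (Ioi 0) := by
  have := integrableOn_rpow_mul_exp_neg_mul_rpow (p := 1) hs one_pos hb
  simpa [Real.rpow_one, neg_mul] using this

lemma normA {z : ℂ} {t : ℝ} (ht : 0 < t) {ν : ℝ} :
    ‖(t:ℂ) ^ (ν:ℂ) * Complex.exp (-(z * t))‖ = t ^ ν * Real.exp (-(z.re * t)) := by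
  rw [norm_mul, Complex.norm_exp,
    Complex.norm_cpow_eq_rpow_re_of_pos ht, Complex.ofReal_re]
  congr 2
  simp [Complex.mul_re]

lemma measA (ν : ℝ) (z : ℂ) :
    AEStronglyMeasurable (fun t : ℝ => (t:ℂ) ^ (ν:ℂ) * Complex.exp (-(z * t)))
      (volume.restrict (Ioi 0)) := by
  apply Measurable.aestronglyMeasurable
  fun_prop

lemma intA {ν : ℝ} (hν : 0 < ν) {z : ℂ} (hz : 0 < z.re) :
    IntegrableOn (fun t : ℝ => (t:ℂ) ^ (ν:ℂ) * Complex.exp (-(z * t))) (Ioi 0) := by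
  refine (intB (s := ν) (by linarith) hz).mono' (measA ν z) ?_
  filter_upwards [ae_restrict_mem measurableSet_Ioi] with t ht
  rw [normA ht]

/-- The Laplace transform of `t^ν` with complex parameter, by analytic continuation. -/
lemma gammaLaplace {ν : ℝ} (hν : 0 < ν) {z : ℂ} (hz : 0 < z.re) :
    ∫ t : ℝ in Ioi 0, (t:ℂ) ^ (ν:ℂ) * Complex.exp (-(z * t)) =
      Complex.Gamma ((ν:ℂ) + 1) * z ^ (-1 - (ν:ℂ)) := by
  set U : Set ℂ := {w : ℂ | 0 < w.re} with hU
  have hUopen : IsOpen U := isOpen_lt continuous_const Complex.continuous_re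
  have hUconn : IsPreconnected U := (convex_halfSpace_re_gt 0).isPreconnected
  set F : ℂ → ℂ := fun w => ∫ t : ℝ in Ioi 0, (t:ℂ) ^ (ν:ℂ) * Complex.exp (-(w * t)) with hF
  set G : ℂ → ℂ := fun w => Complex.Gamma ((ν:ℂ) + 1) * w ^ (-1 - (ν:ℂ)) with hG
  -- differentiability of F
  have hFderiv : ∀ w ∈ U, HasDerivAt F
      (∫ t : ℝ in Ioi 0, (t:ℂ) ^ (ν:ℂ) * (Complex.exp (-(w * t)) * (-(t:ℂ)))) w := by
    intro w hw
    have hw' : 0 < w.re := hw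
    have hε : 0 < w.re / 2 := by linarith
    have hb : IntegrableOn (fun t : ℝ => t ^ (ν + 1) * Real.exp (-(w.re / 2 * t))) (Ioi 0) :=
      intB (by linarith) hε
    have := (hasDerivAt_integral_of_dominated_loc_of_deriv_le (s := Metric.ball w (w.re / 2))
      (F := fun w' (t : ℝ) => (t:ℂ) ^ (ν:ℂ) * Complex.exp (-(w' * t)))
      (F' := fun w' (t : ℝ) => (t:ℂ) ^ (ν:ℂ) * (Complex.exp (-(w' * t)) * (-(t:ℂ))))
      (bound := fun t => t ^ (ν + 1) * Real.exp (-(w.re / 2 * t))) (Metric.ball_mem_nhds w hε)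
      (Eventually.of_forall fun w' => measA ν w') (intA hν hw') ?_ ?_ hb ?_).2
    · exact this
    · apply Measurable.aestronglyMeasurable; fun_prop
    · filter_upwards [ae_restrict_mem measurableSet_Ioi] with t ht w' hw'ball
      have ht' : (0:ℝ) < t := ht
      have hre : w.re / 2 ≤ w'.re := by
        have := Complex.abs_re_le_norm (w' - w)
        rw [Metric.mem_ball, Complex.dist_eq] at hw'ball
        have : |w'.re - w.re| < w.re / 2 := by
          simpa [Complex.sub_re] using lt_of_le_of_lt this hw'ball
        have := abs_lt.mp this
        linarith [this.1]
      have : ‖(t:ℂ) ^ (ν:ℂ) * (Complex.exp (-(w' * t)) * (-(t:ℂ)))‖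
          = t ^ ν * (Real.exp (-(w'.re * t)) * t) := by
        rw [norm_mul, norm_mul,
          Complex.norm_exp, Complex.norm_cpow_eq_rpow_re_of_pos ht', Complex.ofReal_re]
        congr 2
        · simp [Complex.mul_re]
        · simp [abs_of_pos ht']
      rw [this]
      have h1 : t ^ ν * (Real.exp (-(w'.re * t)) * t) = t ^ (ν + 1) * Real.exp (-(w'.re * t)) := by
        rw [Real.rpow_add ht', Real.rpow_one]; ring
      rw [h1]
      have : Real.exp (-(w'.re * t)) ≤ Real.exp (-(w.re / 2 * t)) := by
        apply Real.exp_le_exp.mpr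
        nlinarith
      have hpow : (0:ℝ) ≤ t ^ (ν + 1) := Real.rpow_nonneg ht'.le _
      nlinarith
    · filter_upwards [ae_restrict_mem measurableSet_Ioi] with t ht w' _
      have : HasDerivAt (fun w'' : ℂ => -(w'' * t)) (-(t:ℂ)) w' := by
        exact (hasDerivAt_mul_const (t:ℂ)).neg
      exact (this.cexp).const_mul _
  have hFdiff : DifferentiableOn ℂ F U := fun w hw =>
    ((hFderiv w hw).differentiableAt).differentiableWithinAt
  have hGdiff : DifferentiableOn ℂ G U := by
    intro w hw
    apply DifferentiableAt.differentiableWithinAt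
    refine (differentiableAt_id.cpow (differentiableAt_const _) ?_).const_mul _
    exact Or.inl hw
  -- equality on positive reals
  have hreal : ∀ r : ℝ, 0 < r → F (r:ℂ) = G (r:ℂ) := by
    intro r hr
    have h1 : ((ν:ℂ) + 1).re > 0 := by simp; linarith
    have := integral_cpow_mul_exp_neg_mul_Ioi (a := (ν:ℂ) + 1) h1 hr
    simp only [hF, hG]
    simp only [add_sub_cancel_right] at this
    rw [this]
    rw [mul_comm]
    congr 1
    have harg : (r:ℂ).arg ≠ Real.pi := by
      rw [Complex.arg_ofReal_of_nonneg hr.le]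
      exact Real.pi_ne_zero.symm
    rw [one_div, Complex.inv_cpow _ _ harg, ← Complex.cpow_neg]
    congr 1
    ring
  -- identity theorem
  have h1U : (1:ℂ) ∈ U := by simp [hU]
  have hzU : z ∈ U := hz
  have hseq : Tendsto (fun k : ℕ => ((1 + 1/(k+1) : ℝ) : ℂ)) atTop (𝓝[≠] (1:ℂ)) := by
    apply tendsto_nhdsWithin_of_tendsto_nhds_of_eventually_within
    · have : Tendsto (fun k : ℕ => (1 + 1/(k+1) : ℝ)) atTop (𝓝 1) := by
        have := tendsto_one_div_add_atTop_nhds_zero_nat (𝕜 := ℝ)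
        simpa using (tendsto_const_nhds (x := (1:ℝ))).add this
      have h2 := (Complex.continuous_ofReal.tendsto 1).comp this
      simp only [Function.comp_def, Complex.ofReal_one] at h2
      exact h2
    · filter_upwards with k
      simp only [mem_compl_iff, mem_singleton_iff]
      intro h
      have : (1 + 1/(k+1) : ℝ) = 1 := by exact_mod_cast h
      have hk : (0:ℝ) < 1/(k+1) := by positivity
      linarith
  have hfreq : ∃ᶠ w in 𝓝[≠] (1:ℂ), F w = G w := by
    apply hseq.frequently
    apply Frequently.of_forall
    intro k
    exact hreal _ (by positivity)
  have := (hFdiff.analyticOnNhd hUopen).eqOn_of_preconnected_of_frequently_eq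
    (hGdiff.analyticOnNhd hUopen) hUconn h1U hfreq
  exact this hzU

lemma gammaNeZero {ν : ℝ} (hν : 0 < ν) : Complex.Gamma ((ν:ℂ)+1) ≠ 0 := by
  apply Complex.Gamma_ne_zero
  intro m h
  have := congrArg Complex.re h
  simp at this
  linarith [this, Nat.cast_nonneg (α := ℝ) m]

lemma twoPiPos : (0:ℝ) < 2 * Real.pi := by positivity

/-- norm of the cpow factor -/
lemma cpowNorm {ν : ℝ} (hν : 0 < ν) {b c : ℝ} (hb : 0 < b) :
    ‖((b:ℂ) + (c:ℂ) * Complex.I) ^ (-1 - (ν:ℂ))‖ = Real.sqrt (b^2 + c^2) ^ (-1 - ν) := by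
  have hz : ((b:ℂ) + (c:ℂ) * Complex.I) ≠ 0 := by
    intro h
    have := congrArg Complex.re h
    simp at this
    linarith
  rw [Complex.norm_cpow_of_ne_zero hz]
  have him : ((-1 : ℂ) - (ν:ℂ)).im = 0 := by simp
  have hre : ((-1 : ℂ) - (ν:ℂ)).re = -1 - ν := by simp
  rw [him, hre, mul_zero, Real.exp_zero, div_one]
  congr 1
  rw [Complex.norm_def, Complex.normSq_apply]
  simp only [Complex.add_re, Complex.ofReal_re, Complex.mul_re, Complex.I_re, Complex.I_im,
    Complex.ofReal_im, Complex.add_im, Complex.mul_im]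
  rw [Real.sqrt_eq_rpow, Real.sqrt_eq_rpow]
  ring_nf

lemma cpowBound {ν : ℝ} (hν : 0 < ν) {b ξ₂ : ℝ} (hb : 1 ≤ b) :
    ‖((b:ℂ) + (ξ₂:ℂ) * Complex.I) ^ (-1 - (ν:ℂ))‖ ≤ (1 + ξ₂^2) ^ (-(1+ν)/2) := by
  rw [cpowNorm hν (by linarith)]
  have h1 : Real.sqrt (1 + ξ₂^2) ≤ Real.sqrt (b^2 + ξ₂^2) :=
    Real.sqrt_le_sqrt (by nlinarith)
  calc Real.sqrt (b^2 + ξ₂^2) ^ (-1 - ν)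
      ≤ Real.sqrt (1 + ξ₂^2) ^ (-1 - ν) := by
        apply Real.rpow_le_rpow_of_nonpos (Real.sqrt_pos.mpr (by positivity)) h1 (by linarith)
    _ = (1 + ξ₂^2) ^ (-(1+ν)/2) := by
        rw [Real.sqrt_eq_rpow, ← Real.rpow_mul (by positivity)]
        congr 1
        ring

/-- The key 1-D inverse Fourier integral, via Fourier inversion. -/
lemma innerInt {ν : ℝ} (hν : 0 < ν) {a t : ℝ} (ha : 0 < a) (ht : 0 < t) :
    (∫ ξ : ℝ, Complex.exp (Complex.I * ((t * ξ : ℝ) : ℂ)) *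
        ((a:ℂ) + (ξ:ℂ) * Complex.I) ^ (-1 - (ν:ℂ)))
      = 2 * (Real.pi:ℂ) * ((t ^ ν : ℝ):ℂ) * ((Real.exp (-(a * t)) : ℝ):ℂ) /
          Complex.Gamma ((ν:ℂ) + 1) := by
  have hπ := Real.pi_pos
  set g : ℝ → ℂ := fun τ => ((max τ 0) ^ ν * Real.exp (-(a * τ)) : ℝ) with hgdef
  have hg_ind : g = Set.indicator (Ioi 0) (fun τ => ((τ ^ ν * Real.exp (-(a * τ)) : ℝ) : ℂ)) := by
    funext τ
    by_cases h : τ ∈ Ioi 0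
    · rw [Set.indicator_of_mem h, hgdef]
      simp only
      rw [max_eq_left (le_of_lt h)]
    · rw [Set.indicator_of_notMem h, hgdef]
      simp only [mem_Ioi, not_lt] at h
      simp only
      rw [max_eq_right h, Real.zero_rpow hν.ne']
      simp
  have hg_cont : Continuous g := by
    apply Complex.continuous_ofReal.comp
    apply Continuous.mul ?_ (by continuity)
    apply Continuous.rpow_const (continuous_id.max continuous_const)
    exact fun x => Or.inr hν.le
  have hg_int : Integrable g := by
    rw [hg_ind, integrable_indicator_iff measurableSet_Ioi]
    exact (intB (by linarith) ha).ofReal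
  -- Fourier transform of g
  have hFg : ∀ ξ : ℝ, 𝓕 g ξ =
      Complex.Gamma ((ν:ℂ) + 1) *
        ((a:ℂ) + ((2 * Real.pi * ξ : ℝ):ℂ) * Complex.I) ^ (-1 - (ν:ℂ)) := by
    intro ξ
    set z : ℂ := (a:ℂ) + ((2 * Real.pi * ξ : ℝ):ℂ) * Complex.I with hzdef
    have hzre : 0 < z.re := by simp [hzdef]; exact ha
    rw [Real.fourier_eq']
    have : (∫ v : ℝ, Complex.exp ((↑(-2 * Real.pi * ⟪v, ξ⟫) * Complex.I)) • g v)
        = ∫ v : ℝ in Ioi 0, (v:ℂ) ^ (ν:ℂ) * Complex.exp (-(z * v)) := by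
      rw [hg_ind]
      rw [← integral_indicator measurableSet_Ioi]
      congr 1
      funext v
      by_cases h : v ∈ Ioi 0
      · rw [Set.indicator_of_mem h, Set.indicator_of_mem h]
        have hv : (0:ℝ) < v := h
        have h1 : ((v ^ ν * Real.exp (-(a * v)) : ℝ) : ℂ)
            = (v:ℂ) ^ (ν:ℂ) * Complex.exp ((-(a*v) : ℝ) : ℂ) := by
          rw [Complex.ofReal_mul, ← Complex.ofReal_cpow hv.le, Complex.ofReal_exp]
        rw [smul_eq_mul, h1, mul_comm (Complex.exp _), mul_assoc, ← Complex.exp_add]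
        congr 2
        rw [hzdef]
        simp only [RCLike.inner_apply, conj_trivial]
        push_cast
        ring
      · rw [Set.indicator_of_notMem h, Set.indicator_of_notMem h, smul_zero]
    rw [this, gammaLaplace hν hzre]
  -- integrability of 𝓕 g
  have h𝓕cont : Continuous (𝓕 g) := by
    have : (𝓕 g) = fun ξ : ℝ =>
        Complex.Gamma ((ν:ℂ) + 1) *
          ((a:ℂ) + ((2 * Real.pi * ξ : ℝ):ℂ) * Complex.I) ^ (-1 - (ν:ℂ)) := funext hFg
    rw [this]
    apply continuous_const.mul
    apply Continuous.cpow ?_ continuous_const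
    · intro x
      apply Complex.mem_slitPlane_iff.mpr
      left; simpa using ha
    · continuity
  have h𝓕int : Integrable (𝓕 g) := by
    set m : ℝ := min a (2 * Real.pi) with hm
    have hm0 : 0 < m := lt_min ha twoPiPos
    have hbound : ∀ ξ : ℝ, ‖𝓕 g ξ‖ ≤
        ‖Complex.Gamma ((ν:ℂ)+1)‖ * (m/2)^(-1-ν) * ((1 + ‖ξ‖) ^ (-(1+ν))) := by
      intro ξ
      rw [hFg ξ, norm_mul]
      rw [cpowNorm hν ha]
      have hs : m/2 * (1 + ‖ξ‖) ≤ Real.sqrt (a^2 + (2*Real.pi*ξ)^2) := by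
        have h1 : a ≤ Real.sqrt (a^2 + (2*Real.pi*ξ)^2) := by
          rw [Real.le_sqrt ha.le]
          · nlinarith
          · positivity
        have h2 : 2*Real.pi*|ξ| ≤ Real.sqrt (a^2 + (2*Real.pi*ξ)^2) := by
          rw [Real.le_sqrt (by positivity)]
          · rw [show (2*Real.pi*|ξ|)^2 = (2*Real.pi*ξ)^2 by
              rw [mul_pow, mul_pow, _root_.sq_abs]; ring]
            nlinarith [sq_nonneg a]
          · positivity
        have hma : m ≤ a := min_le_left _ _
        have hmp : m ≤ 2*Real.pi := min_le_right _ _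
        have hmx : m * |ξ| ≤ 2*Real.pi*|ξ| := by
          apply mul_le_mul_of_nonneg_right hmp (abs_nonneg ξ)
        rw [Real.norm_eq_abs]
        nlinarith [abs_nonneg ξ]
      have hfin : Real.sqrt (a^2 + (2*Real.pi*ξ)^2) ^ (-1-ν)
          ≤ (m/2)^(-1-ν) * ((1 + ‖ξ‖) ^ (-(1+ν))) := by
        calc Real.sqrt (a^2 + (2*Real.pi*ξ)^2) ^ (-1-ν)
            ≤ (m/2 * (1 + ‖ξ‖)) ^ (-1-ν) := by
              apply Real.rpow_le_rpow_of_nonpos (by positivity) hs (by linarith)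
          _ = (m/2)^(-1-ν) * ((1 + ‖ξ‖) ^ (-1-ν)) := by
              rw [Real.mul_rpow (by positivity) (by positivity)]
          _ = (m/2)^(-1-ν) * ((1 + ‖ξ‖) ^ (-(1+ν))) := by ring_nf
      calc ‖Complex.Gamma ((ν:ℂ)+1)‖ * Real.sqrt (a^2 + (2*Real.pi*ξ)^2) ^ (-1-ν)
          ≤ ‖Complex.Gamma ((ν:ℂ)+1)‖ *
              ((m/2)^(-1-ν) * ((1 + ‖ξ‖) ^ (-(1+ν)))) :=
            mul_le_mul_of_nonneg_left hfin (norm_nonneg _)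
        _ = _ := by ring
    have hdom : Integrable (fun ξ : ℝ =>
        ‖Complex.Gamma ((ν:ℂ)+1)‖ * (m/2)^(-1-ν) * ((1 + ‖ξ‖) ^ (-(1+ν)))) := by
      apply Integrable.const_mul
      apply integrable_one_add_norm
      simp; linarith
    exact hdom.mono' h𝓕cont.aestronglyMeasurable
      (Filter.Eventually.of_forall hbound)
  -- Fourier inversion
  have hinv : 𝓕⁻ (𝓕 g) = g := hg_cont.fourierInv_fourier_eq hg_int h𝓕int
  -- the integral of H
  set H : ℝ → ℂ := fun η => Complex.exp ((↑(2 * Real.pi * (η * t)) : ℂ) * Complex.I) *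
      (Complex.Gamma ((ν:ℂ) + 1) *
        ((a:ℂ) + ((2 * Real.pi * η : ℝ):ℂ) * Complex.I) ^ (-1 - (ν:ℂ))) with hHdef
  have hH : (∫ η : ℝ, H η) = g t := by
    conv_rhs => rw [← hinv]
    rw [Real.fourierInv_eq']
    congr 1
    funext η
    rw [hHdef, hFg η, smul_eq_mul]
    simp only [RCLike.inner_apply, conj_trivial]
    rw [mul_comm t η]
  -- change of variables
  have key : (∫ ξ : ℝ, Complex.exp (Complex.I * ((t * ξ : ℝ) : ℂ)) *
        ((a:ℂ) + (ξ:ℂ) * Complex.I) ^ (-1 - (ν:ℂ)))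
      = (Complex.Gamma ((ν:ℂ)+1))⁻¹ * ∫ ξ : ℝ, H ((2*Real.pi)⁻¹ * ξ) := by
    rw [← integral_const_mul]
    congr 1
    funext ξ
    rw [hHdef]
    simp only
    have e1 : 2 * Real.pi * ((2*Real.pi)⁻¹ * ξ * t) = t * ξ := by
      field_simp
    have e2 : (2 * Real.pi * ((2*Real.pi)⁻¹ * ξ) : ℝ) = ξ := by field_simp
    rw [e1, e2]
    rw [mul_comm ((↑(t * ξ) : ℂ)) Complex.I]
    have hΓ := gammaNeZero hν
    field_simp
  rw [key, MeasureTheory.Measure.integral_comp_mul_left H ((2*Real.pi)⁻¹), inv_inv,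
    abs_of_pos twoPiPos, hH]
  rw [hgdef]
  simp only
  rw [max_eq_left ht.le, Complex.real_smul]
  have hΓ := gammaNeZero hν
  rw [Complex.ofReal_mul]
  push_cast
  field_simp

lemma inner_eq_sum {m : ℕ} (y ξ : EuclideanSpace ℝ (Fin m)) :
    ⟪y, ξ⟫ = ∑ i, y i * ξ i := by
  simp [PiLp.inner_apply, RCLike.inner_apply]
  exact Finset.sum_congr rfl fun _ _ => mul_comm _ _

lemma fourierTr_eq {m : ℕ} (φ : EuclideanSpace ℝ (Fin m) → ℂ) (ξ : EuclideanSpace ℝ (Fin m)) :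
    fourierTr φ ξ = 𝓕 φ ((2 * Real.pi)⁻¹ • ξ) := by
  rw [fourierTr, Real.fourier_eq']
  congr 1
  funext y
  rw [smul_eq_mul]
  have h : -2 * Real.pi * ⟪y, (2*Real.pi)⁻¹ • ξ⟫ = -(∑ i, y i * ξ i) := by
    rw [real_inner_smul_right, inner_eq_sum]
    have := Real.pi_ne_zero
    field_simp
  rw [h]
  congr 1
  push_cast
  ring

end Aux

/-- `K₀^μ` is a right inverse of the weighted trace `γ₀^μ : u ↦ Γ(μ+1) γ₀(u/x_n^μ)`:
the defining integral converges absolutely for `x_n > 0`, and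
`Γ(μ+1) x_n^{-μ} (K₀^μ φ)(x', x_n) → φ(x')` uniformly in `x'` as `x_n → 0+`. -/
theorem poissonKmu_weighted_trace (n : ℕ) (hn : 2 ≤ n) (μ : ℝ) (hμ : 0 < μ)
    (φ : SchwartzMap (EuclideanSpace ℝ (Fin (n - 1))) ℂ) :
    (∀ (x' : EuclideanSpace ℝ (Fin (n - 1))) (t : ℝ), 0 < t →
      Integrable
        (fun ξ : EuclideanSpace ℝ (Fin (n - 1)) × ℝ =>
          Complex.exp (Complex.I * ((∑ i, x' i * ξ.1 i : ℝ) + t * ξ.2 : ℝ)) *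
            fourierTr (fun y => φ y) ξ.1 *
            ((Real.sqrt (1 + ‖ξ.1‖ ^ 2) : ℂ) + (ξ.2 : ℂ) * Complex.I) ^ (-1 - (μ : ℂ)))
        volume) ∧
    TendstoUniformly
      (fun t x' => Complex.Gamma ((μ : ℂ) + 1) * ((t ^ (-μ) : ℝ) : ℂ) * poissonKmu n μ φ x' t)
      (fun x' => φ x') (nhdsWithin 0 (Ioi 0)) := by
  have hπ := Real.pi_pos
  set E' := EuclideanSpace ℝ (Fin (n - 1)) with hE'
  set ψ : E' → ℂ := 𝓕 (fun y => (φ y : ℂ)) with hψ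
  have hψ_int : Integrable ψ volume := by
    simpa [SchwartzMap.fourier_coe] using (SchwartzMap.fourierTransformCLM ℂ φ).integrable (μ := volume)
  have hψ_cont : Continuous ψ := by
    have : ψ = ⇑(SchwartzMap.fourierTransformCLM ℂ φ) := by
      simp [hψ, SchwartzMap.fourier_coe]
    rw [this]
    exact (SchwartzMap.fourierTransformCLM ℂ φ).continuous
  have hc0 : ((2 * Real.pi)⁻¹ : ℝ) ≠ 0 := ne_of_gt (by positivity)
  have hψc_int : Integrable (fun ξ : E' => ψ ((2 * Real.pi)⁻¹ • ξ)) volume :=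
    hψ_int.comp_smul hc0
  have hψc_cont : Continuous (fun ξ : E' => ψ ((2 * Real.pi)⁻¹ • ξ)) :=
    hψ_cont.comp (continuous_const_smul _)
  have hsq : ∀ ξ' : E', 0 < Real.sqrt (1 + ‖ξ'‖ ^ 2) :=
    fun ξ' => Real.sqrt_pos.mpr (by positivity)
  have hsq1 : ∀ ξ' : E', 1 ≤ Real.sqrt (1 + ‖ξ'‖ ^ 2) := by
    intro ξ'
    have := Real.sqrt_le_sqrt (show (1:ℝ) ≤ 1 + ‖ξ'‖ ^ 2 by nlinarith [sq_nonneg ‖ξ'‖])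
    simpa [Real.sqrt_one] using this
  have hacont : Continuous fun ξ' : E' => Real.sqrt (1 + ‖ξ'‖ ^ 2) :=
    Real.continuous_sqrt.comp (continuous_const.add (by fun_prop))
  -- continuity of the sum functional
  have hScont : ∀ x' : E', Continuous fun ξ' : E' => (∑ i, x' i * ξ' i : ℝ) := by
    intro x'
    have : (fun ξ' : E' => (∑ i, x' i * ξ' i : ℝ)) = fun ξ' => ⟪x', ξ'⟫ := by
      funext ξ'; rw [inner_eq_sum]
    rw [this]
    exact continuous_const.inner continuous_id
  -- integrability on the product space (𝓕 form)
  have hIntProd' : ∀ (x' : E') (t : ℝ),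
      Integrable (fun ξ : E' × ℝ =>
        Complex.exp (Complex.I * ((∑ i, x' i * ξ.1 i : ℝ) + t * ξ.2 : ℝ)) *
          ψ ((2 * Real.pi)⁻¹ • ξ.1) *
          ((Real.sqrt (1 + ‖ξ.1‖ ^ 2) : ℂ) + (ξ.2 : ℂ) * Complex.I) ^ (-1 - (μ : ℂ)))
        (Measure.prod volume volume) := by
    intro x' t
    have hbnd : Integrable (fun p : E' × ℝ =>
        ‖ψ ((2 * Real.pi)⁻¹ • p.1)‖ * ((1 + p.2 ^ 2) ^ (-(1+μ)/2)))
        (Measure.prod volume volume) := by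
      have h2int : Integrable (fun ξ₂ : ℝ => (1 + ξ₂ ^ 2) ^ (-(1+μ)/2)) volume := by
        have := integrable_rpow_neg_one_add_norm_sq (E := ℝ) (μ := volume) (r := 1 + μ)
          (by simp [Module.finrank_self]; linarith)
        apply this.congr
        filter_upwards with x
        rw [Real.norm_eq_abs, _root_.sq_abs]
      exact hψc_int.norm.mul_prod h2int
    have hcont : Continuous (fun ξ : E' × ℝ =>
        Complex.exp (Complex.I * ((∑ i, x' i * ξ.1 i : ℝ) + t * ξ.2 : ℝ)) *
          ψ ((2 * Real.pi)⁻¹ • ξ.1) *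
          ((Real.sqrt (1 + ‖ξ.1‖ ^ 2) : ℂ) + (ξ.2 : ℂ) * Complex.I) ^ (-1 - (μ : ℂ))) := by
      apply Continuous.mul
      · apply Continuous.mul
        · apply Complex.continuous_exp.comp
          apply continuous_const.mul
          apply Complex.continuous_ofReal.comp
          exact ((hScont x').comp continuous_fst).add (continuous_const.mul continuous_snd)
        · exact hψc_cont.comp continuous_fst
      · apply Continuous.cpow ?_ continuous_const
        · intro p
          apply Complex.mem_slitPlane_iff.mpr
          left
          simpa using hsq p.1
        · apply Continuous.add ?_ ((Complex.continuous_ofReal.comp continuous_snd).mul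
            continuous_const)
          apply Complex.continuous_ofReal.comp
          exact Real.continuous_sqrt.comp
            (show Continuous fun p : E' × ℝ => 1 + ‖p.1‖ ^ 2 by continuity)
    apply hbnd.mono' hcont.aestronglyMeasurable
    filter_upwards with p
    rw [norm_mul, norm_mul]
    have h1 : ‖Complex.exp (Complex.I * ((∑ i, x' i * p.1 i : ℝ) + t * p.2 : ℝ))‖ = 1 := by
      rw [Complex.norm_exp]
      simp [Complex.mul_re]
    rw [h1, one_mul]
    have h2 := cpowBound hμ (b := Real.sqrt (1 + ‖p.1‖ ^ 2)) (ξ₂ := p.2) (hsq1 p.1)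
    calc ‖ψ ((2 * Real.pi)⁻¹ • p.1)‖ *
          ‖((Real.sqrt (1 + ‖p.1‖ ^ 2) : ℂ) + (p.2 : ℂ) * Complex.I) ^ (-1 - (μ : ℂ))‖
        ≤ ‖ψ ((2 * Real.pi)⁻¹ • p.1)‖ * ((1 + p.2 ^ 2) ^ (-(1+μ)/2)) :=
          mul_le_mul_of_nonneg_left h2 (norm_nonneg _)
      _ = _ := rfl
  have hIntProd : ∀ (x' : E') (t : ℝ),
      Integrable (fun ξ : E' × ℝ =>
        Complex.exp (Complex.I * ((∑ i, x' i * ξ.1 i : ℝ) + t * ξ.2 : ℝ)) *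
          fourierTr (fun y => φ y) ξ.1 *
          ((Real.sqrt (1 + ‖ξ.1‖ ^ 2) : ℂ) + (ξ.2 : ℂ) * Complex.I) ^ (-1 - (μ : ℂ)))
        volume := by
    intro x' t
    rw [MeasureTheory.Measure.volume_eq_prod]
    simp_rw [fourierTr_eq]
    exact hIntProd' x' t
  have hΓ := gammaNeZero hμ
  have h2πC : (2 * (Real.pi : ℂ)) ≠ 0 := by
    simp [Real.pi_ne_zero]
  -- the weighted operator for t > 0
  have hKmu : ∀ (x' : E') (t : ℝ), 0 < t →
      Complex.Gamma ((μ:ℂ) + 1) * ((t ^ (-μ) : ℝ) : ℂ) * poissonKmu n μ φ x' t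
        = ((2 * (Real.pi:ℂ)) ^ (n-1))⁻¹ * ∫ ξ' : E',
            Complex.exp (Complex.I * ((∑ i, x' i * ξ' i : ℝ) : ℂ)) * ψ ((2 * Real.pi)⁻¹ • ξ') *
              ((Real.exp (-(Real.sqrt (1 + ‖ξ'‖ ^ 2) * t)) : ℝ) : ℂ) := by
    intro x' t ht
    rw [poissonKmu]
    rw [MeasureTheory.Measure.volume_eq_prod]
    simp_rw [fourierTr_eq]
    rw [MeasureTheory.integral_prod _ (hIntProd' x' t)]
    have hinner : ∀ ξ' : E',
        (∫ ξ₂ : ℝ, Complex.exp (Complex.I * ((∑ i, x' i * ξ' i : ℝ) + t * ξ₂ : ℝ)) *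
            ψ ((2 * Real.pi)⁻¹ • ξ') *
            ((Real.sqrt (1 + ‖ξ'‖ ^ 2) : ℂ) + (ξ₂ : ℂ) * Complex.I) ^ (-1 - (μ : ℂ)))
          = (2 * (Real.pi:ℂ) * ((t ^ μ : ℝ):ℂ) / Complex.Gamma ((μ:ℂ) + 1)) *
              (Complex.exp (Complex.I * ((∑ i, x' i * ξ' i : ℝ) : ℂ)) *
                ψ ((2 * Real.pi)⁻¹ • ξ') *
                ((Real.exp (-(Real.sqrt (1 + ‖ξ'‖ ^ 2) * t)) : ℝ) : ℂ)) := by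
      intro ξ'
      have e : ∀ ξ₂ : ℝ,
          Complex.exp (Complex.I * ((∑ i, x' i * ξ' i : ℝ) + t * ξ₂ : ℝ)) *
            ψ ((2 * Real.pi)⁻¹ • ξ') *
            ((Real.sqrt (1 + ‖ξ'‖ ^ 2) : ℂ) + (ξ₂ : ℂ) * Complex.I) ^ (-1 - (μ : ℂ))
          = (Complex.exp (Complex.I * ((∑ i, x' i * ξ' i : ℝ) : ℂ)) * ψ ((2 * Real.pi)⁻¹ • ξ')) *
            (Complex.exp (Complex.I * ((t * ξ₂ : ℝ) : ℂ)) *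
              ((Real.sqrt (1 + ‖ξ'‖ ^ 2) : ℂ) + (ξ₂ : ℂ) * Complex.I) ^ (-1 - (μ : ℂ))) := by
        intro ξ₂
        rw [Complex.ofReal_add, mul_add, Complex.exp_add]
        ring
      simp_rw [e]
      rw [integral_const_mul, innerInt hμ (hsq ξ') ht]
      ring
    simp_rw [hinner]
    rw [integral_const_mul]
    have hpow : (2 * (Real.pi:ℂ)) ^ n = 2 * (Real.pi:ℂ) * (2 * (Real.pi:ℂ)) ^ (n-1) := by
      rw [← pow_succ']
      congr 1
      omega
    have htt : ((t:ℝ) ^ (-μ) * t ^ μ : ℝ) = 1 := by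
      rw [← Real.rpow_add ht]
      simp
    have htt' : ((t ^ (-μ) : ℝ) : ℂ) * ((t ^ μ : ℝ) : ℂ) = 1 := by
      rw [← Complex.ofReal_mul, htt, Complex.ofReal_one]
    have h2πn1 : ((2 * (Real.pi:ℂ)) ^ (n-1)) ≠ 0 := pow_ne_zero _ h2πC
    have halg : ∀ J : ℂ, Complex.Gamma ((μ:ℂ)+1) * ((t ^ (-μ) : ℝ) : ℂ) *
        (((2 * (Real.pi:ℂ)) ^ n)⁻¹ * ((2 * (Real.pi:ℂ) * ((t ^ μ : ℝ):ℂ) /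
          Complex.Gamma ((μ:ℂ)+1)) * J)) = ((2 * (Real.pi:ℂ)) ^ (n-1))⁻¹ * J := by
      intro J
      rw [hpow, div_eq_mul_inv, mul_inv]
      have e : Complex.Gamma ((μ:ℂ)+1) * ((t ^ (-μ) : ℝ) : ℂ) *
          ((2 * (Real.pi:ℂ))⁻¹ * ((2 * (Real.pi:ℂ)) ^ (n-1))⁻¹ *
            (2 * (Real.pi:ℂ) * ((t ^ μ : ℝ):ℂ) * (Complex.Gamma ((μ:ℂ)+1))⁻¹ * J))
          = (Complex.Gamma ((μ:ℂ)+1) * (Complex.Gamma ((μ:ℂ)+1))⁻¹) *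
            ((2 * (Real.pi:ℂ)) * (2 * (Real.pi:ℂ))⁻¹) *
            (((t ^ (-μ) : ℝ) : ℂ) * ((t ^ μ : ℝ):ℂ)) *
            (((2 * (Real.pi:ℂ)) ^ (n-1))⁻¹ * J) := by
        ring
      rw [e, mul_inv_cancel₀ hΓ, mul_inv_cancel₀ h2πC, htt']
      ring
    exact halg _
  -- Fourier inversion identity
  have hInv : ∀ x' : E',
      ((2 * (Real.pi:ℂ)) ^ (n-1))⁻¹ * ∫ ξ' : E',
          Complex.exp (Complex.I * ((∑ i, x' i * ξ' i : ℝ) : ℂ)) * ψ ((2 * Real.pi)⁻¹ • ξ')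
        = φ x' := by
    intro x'
    have hHeq : ∀ ξ' : E',
        Complex.exp (Complex.I * ((∑ i, x' i * ξ' i : ℝ) : ℂ)) * ψ ((2 * Real.pi)⁻¹ • ξ')
          = (fun η : E' => Complex.exp ((↑(2 * Real.pi * ⟪η, x'⟫) : ℂ) * Complex.I) * ψ η)
              ((2 * Real.pi)⁻¹ • ξ') := by
      intro ξ'
      simp only
      congr 2
      have h1 : ⟪(2 * Real.pi)⁻¹ • ξ', x'⟫ = (2 * Real.pi)⁻¹ * ⟪ξ', x'⟫ :=
        real_inner_smul_left _ _ _
      have h2 : ⟪ξ', x'⟫ = ∑ i, x' i * ξ' i := by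
        rw [inner_eq_sum]
        exact Finset.sum_congr rfl fun i _ => mul_comm _ _
      rw [h1, h2]
      have : (2 * Real.pi * ((2 * Real.pi)⁻¹ * ∑ i, x' i * ξ' i) : ℝ)
          = (∑ i, x' i * ξ' i : ℝ) := by
        field_simp
      rw [this]
      ring
    simp_rw [hHeq]
    rw [MeasureTheory.Measure.integral_comp_smul volume
      (fun η : E' => Complex.exp ((↑(2 * Real.pi * ⟪η, x'⟫) : ℂ) * Complex.I) * ψ η)
      ((2 * Real.pi)⁻¹)]
    have hfr : Module.finrank ℝ E' = n - 1 := finrank_euclideanSpace_fin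
    rw [hfr]
    have hFinv : (∫ η : E', Complex.exp ((↑(2 * Real.pi * ⟪η, x'⟫) : ℂ) * Complex.I) * ψ η)
        = φ x' := by
      have h1 : (∫ η : E', Complex.exp ((↑(2 * Real.pi * ⟪η, x'⟫) : ℂ) * Complex.I) * ψ η)
          = 𝓕⁻ ψ x' := by
        rw [Real.fourierInv_eq']
        congr 1
      rw [h1, hψ]
      exact φ.integrable.fourierInv_fourier_eq
        (by simpa [SchwartzMap.fourier_coe] using (SchwartzMap.fourierTransformCLM ℂ φ).integrable (μ := volume))
        φ.continuous.continuousAt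
    rw [hFinv]
    have habs : |(((2 * Real.pi)⁻¹ : ℝ) ^ (n-1))⁻¹| = ((2 * Real.pi : ℝ)) ^ (n-1) := by
      rw [abs_of_pos (by positivity)]
      rw [← inv_pow, inv_inv]
    rw [habs, Complex.real_smul]
    rw [← mul_assoc]
    have : ((2 * (Real.pi:ℂ)) ^ (n-1))⁻¹ * (((2 * Real.pi : ℝ) ^ (n-1) : ℝ) : ℂ) = 1 := by
      push_cast
      field_simp
    rw [this, one_mul]
  constructor
  · intro x' t _
    exact hIntProd x' t
  · -- uniform convergence via dominated convergence
    rw [Metric.tendstoUniformly_iff]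
    intro ε hε
    -- integrands
    have hJt_int : ∀ (x' : E') (t : ℝ), 0 ≤ t → Integrable (fun ξ' : E' =>
        Complex.exp (Complex.I * ((∑ i, x' i * ξ' i : ℝ) : ℂ)) * ψ ((2 * Real.pi)⁻¹ • ξ') *
          ((Real.exp (-(Real.sqrt (1 + ‖ξ'‖ ^ 2) * t)) : ℝ) : ℂ)) volume := by
      intro x' t htnn
      have hcont : Continuous (fun ξ' : E' =>
          Complex.exp (Complex.I * ((∑ i, x' i * ξ' i : ℝ) : ℂ)) * ψ ((2 * Real.pi)⁻¹ • ξ') *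
            ((Real.exp (-(Real.sqrt (1 + ‖ξ'‖ ^ 2) * t)) : ℝ) : ℂ)) := by
        apply Continuous.mul
        · exact (Complex.continuous_exp.comp (continuous_const.mul
            (Complex.continuous_ofReal.comp (hScont x')))).mul hψc_cont
        · exact Complex.continuous_ofReal.comp (Real.continuous_exp.comp ((hacont.mul continuous_const).neg))
      apply (hψc_int.norm).mono' hcont.aestronglyMeasurable
      filter_upwards with ξ'
      rw [norm_mul, norm_mul]
      have h1 : ‖Complex.exp (Complex.I * ((∑ i, x' i * ξ' i : ℝ) : ℂ))‖ = 1 := by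
        rw [Complex.norm_exp]
        simp [Complex.mul_re]
      rw [h1, one_mul]
      have h2 : ‖((Real.exp (-(Real.sqrt (1 + ‖ξ'‖ ^ 2) * t)) : ℝ) : ℂ)‖ ≤ 1 := by
        rw [Complex.norm_real, Real.norm_eq_abs, abs_of_pos (Real.exp_pos _)]
        apply Real.exp_le_one_iff.mpr
        have := hsq ξ'
        nlinarith
      calc ‖ψ ((2 * Real.pi)⁻¹ • ξ')‖ * ‖((Real.exp (-(Real.sqrt (1 + ‖ξ'‖ ^ 2) * t)) : ℝ) : ℂ)‖
          ≤ ‖ψ ((2 * Real.pi)⁻¹ • ξ')‖ * 1 := mul_le_mul_of_nonneg_left h2 (norm_nonneg _)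
        _ = _ := mul_one _
    -- dominated convergence for the error integral
    have hB : Tendsto (fun t : ℝ => ∫ ξ' : E',
        ‖ψ ((2 * Real.pi)⁻¹ • ξ')‖ *
          |Real.exp (-(Real.sqrt (1 + ‖ξ'‖ ^ 2) * t)) - 1|) (𝓝[>] (0:ℝ)) (𝓝 0) := by
      have hmain := MeasureTheory.tendsto_integral_filter_of_dominated_convergence
        (F := fun (t : ℝ) (ξ' : E') => ‖ψ ((2 * Real.pi)⁻¹ • ξ')‖ *
          |Real.exp (-(Real.sqrt (1 + ‖ξ'‖ ^ 2) * t)) - 1|)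
        (f := fun _ : E' => (0:ℝ)) (bound := fun ξ' : E' => ‖ψ ((2 * Real.pi)⁻¹ • ξ')‖)
        (l := 𝓝[>] (0:ℝ)) (μ := volume) ?_ ?_ ?_ ?_
      · simpa using hmain
      · filter_upwards with t
        apply Continuous.aestronglyMeasurable
        apply Continuous.mul (hψc_cont.norm)
        apply Continuous.abs
        exact (Real.continuous_exp.comp ((hacont.mul continuous_const).neg)).sub continuous_const
      · filter_upwards [self_mem_nhdsWithin] with t ht
        filter_upwards with ξ'
        have htp : (0:ℝ) < t := ht
        have hexp : Real.exp (-(Real.sqrt (1 + ‖ξ'‖ ^ 2) * t)) ≤ 1 := by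
          apply Real.exp_le_one_iff.mpr
          have := hsq ξ'
          nlinarith
        have hexp0 : 0 < Real.exp (-(Real.sqrt (1 + ‖ξ'‖ ^ 2) * t)) := Real.exp_pos _
        rw [Real.norm_eq_abs, _root_.abs_of_nonneg (by positivity)]
        have : |Real.exp (-(Real.sqrt (1 + ‖ξ'‖ ^ 2) * t)) - 1| ≤ 1 := by
          rw [abs_le]; constructor <;> nlinarith
        calc ‖ψ ((2 * Real.pi)⁻¹ • ξ')‖ * |Real.exp (-(Real.sqrt (1 + ‖ξ'‖ ^ 2) * t)) - 1|
            ≤ ‖ψ ((2 * Real.pi)⁻¹ • ξ')‖ * 1 := mul_le_mul_of_nonneg_left this (norm_nonneg _)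
          _ = _ := mul_one _
      · exact hψc_int.norm
      · filter_upwards with ξ'
        have hcont : Continuous (fun t : ℝ =>
            ‖ψ ((2 * Real.pi)⁻¹ • ξ')‖ *
              |Real.exp (-(Real.sqrt (1 + ‖ξ'‖ ^ 2) * t)) - 1|) := by
          apply Continuous.mul continuous_const
          apply Continuous.abs
          exact (Real.continuous_exp.comp ((continuous_const.mul continuous_id).neg)).sub continuous_const
        have h0' := (hcont.tendsto 0).mono_left (nhdsWithin_le_nhds (s := Ioi (0:ℝ)))
        simpa using h0'
    have hev := hB.eventually_lt_const hε
    filter_upwards [hev, self_mem_nhdsWithin] with t htε ht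
    intro x'
    have htp : (0:ℝ) < t := ht
    have hJ0_int : Integrable (fun ξ' : E' =>
        Complex.exp (Complex.I * ((∑ i, x' i * ξ' i : ℝ) : ℂ)) *
          ψ ((2 * Real.pi)⁻¹ • ξ')) volume := by
      apply (hJt_int x' 0 le_rfl).congr
      filter_upwards with ξ'
      simp
    have hBint : Integrable (fun ξ' : E' => ‖ψ ((2 * Real.pi)⁻¹ • ξ')‖ *
        |Real.exp (-(Real.sqrt (1 + ‖ξ'‖ ^ 2) * t)) - 1|) volume := by
      apply (hψc_int.norm).mono' ?_ ?_
      · apply Continuous.aestronglyMeasurable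
        apply Continuous.mul (hψc_cont.norm)
        apply Continuous.abs
        exact (Real.continuous_exp.comp ((hacont.mul continuous_const).neg)).sub continuous_const
      · filter_upwards with ξ'
        have hexp : Real.exp (-(Real.sqrt (1 + ‖ξ'‖ ^ 2) * t)) ≤ 1 := by
          apply Real.exp_le_one_iff.mpr
          have := hsq ξ'
          nlinarith
        have hexp0 : 0 < Real.exp (-(Real.sqrt (1 + ‖ξ'‖ ^ 2) * t)) := Real.exp_pos _
        rw [Real.norm_eq_abs, _root_.abs_of_nonneg (by positivity)]
        have h1 : |Real.exp (-(Real.sqrt (1 + ‖ξ'‖ ^ 2) * t)) - 1| ≤ 1 := by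
          rw [abs_le]; constructor <;> nlinarith
        calc ‖ψ ((2 * Real.pi)⁻¹ • ξ')‖ * |Real.exp (-(Real.sqrt (1 + ‖ξ'‖ ^ 2) * t)) - 1|
            ≤ ‖ψ ((2 * Real.pi)⁻¹ • ξ')‖ * 1 := mul_le_mul_of_nonneg_left h1 (norm_nonneg _)
          _ = _ := mul_one _
    rw [dist_eq_norm, hKmu x' t htp]
    nth_rewrite 1 [← hInv x']
    rw [← mul_sub, ← MeasureTheory.integral_sub hJ0_int (hJt_int x' t htp.le), norm_mul]
    have hnc : ‖((2 * (Real.pi:ℂ)) ^ (n-1))⁻¹‖ ≤ 1 := by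
      rw [norm_inv, norm_pow]
      have h2 : (1:ℝ) ≤ ‖(2 * (Real.pi:ℂ))‖ := by
        rw [show (2 * (Real.pi:ℂ)) = ((2 * Real.pi : ℝ) : ℂ) by push_cast; ring]
        rw [Complex.norm_real, Real.norm_eq_abs, abs_of_pos twoPiPos]
        nlinarith [Real.pi_gt_three]
      have h3 : (1:ℝ) ≤ ‖(2 * (Real.pi:ℂ))‖ ^ (n-1) := one_le_pow₀ h2
      exact inv_le_one_of_one_le₀ h3
    have hbound2 : ‖∫ ξ' : E',
        (Complex.exp (Complex.I * ((∑ i, x' i * ξ' i : ℝ) : ℂ)) * ψ ((2 * Real.pi)⁻¹ • ξ') -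
          Complex.exp (Complex.I * ((∑ i, x' i * ξ' i : ℝ) : ℂ)) * ψ ((2 * Real.pi)⁻¹ • ξ') *
            ((Real.exp (-(Real.sqrt (1 + ‖ξ'‖ ^ 2) * t)) : ℝ) : ℂ))‖
        ≤ ∫ ξ' : E', ‖ψ ((2 * Real.pi)⁻¹ • ξ')‖ *
            |Real.exp (-(Real.sqrt (1 + ‖ξ'‖ ^ 2) * t)) - 1| := by
      apply MeasureTheory.norm_integral_le_of_norm_le hBint
      filter_upwards with ξ'
      rw [← mul_one_sub, norm_mul, norm_mul]
      have hexpn : ‖Complex.exp (Complex.I * ((∑ i, x' i * ξ' i : ℝ) : ℂ))‖ = 1 := by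
        rw [Complex.norm_exp]
        simp [Complex.mul_re]
      rw [hexpn, one_mul]
      have h1 : ‖1 - ((Real.exp (-(Real.sqrt (1 + ‖ξ'‖ ^ 2) * t)) : ℝ) : ℂ)‖
          = |Real.exp (-(Real.sqrt (1 + ‖ξ'‖ ^ 2) * t)) - 1| := by
        rw [show (1:ℂ) - ((Real.exp (-(Real.sqrt (1 + ‖ξ'‖ ^ 2) * t)) : ℝ) : ℂ)
            = ((1 - Real.exp (-(Real.sqrt (1 + ‖ξ'‖ ^ 2) * t)) : ℝ) : ℂ) by push_cast; ring]
        rw [Complex.norm_real, Real.norm_eq_abs, abs_sub_comm]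
      rw [h1]
    calc ‖((2 * (Real.pi:ℂ)) ^ (n-1))⁻¹‖ * ‖∫ ξ' : E',
          (Complex.exp (Complex.I * ((∑ i, x' i * ξ' i : ℝ) : ℂ)) * ψ ((2 * Real.pi)⁻¹ • ξ') -
            Complex.exp (Complex.I * ((∑ i, x' i * ξ' i : ℝ) : ℂ)) * ψ ((2 * Real.pi)⁻¹ • ξ') *
              ((Real.exp (-(Real.sqrt (1 + ‖ξ'‖ ^ 2) * t)) : ℝ) : ℂ))‖
        ≤ 1 * ∫ ξ' : E', ‖ψ ((2 * Real.pi)⁻¹ • ξ')‖ *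
            |Real.exp (-(Real.sqrt (1 + ‖ξ'‖ ^ 2) * t)) - 1| :=
          mul_le_mul hnc hbound2 (norm_nonneg _) zero_le_one
      _ = ∫ ξ' : E', ‖ψ ((2 * Real.pi)⁻¹ • ξ')‖ *
            |Real.exp (-(Real.sqrt (1 + ‖ξ'‖ ^ 2) * t)) - 1| := one_mul _
      _ < ε := htε
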